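/- Let S¹ act continuously on a topological space M, let φ : M → ℝ be a continuous S¹-invariant function, and let a ∈ ℝ. Then the cut space M^a = ψ⁻¹(a)/S¹ is in bijection with the disjoint union of the sublevel set M_{φ<a} = {m ∈ M : φ(m) < a} and the quotient M_a = φ⁻¹(a)/S¹. Explicitly, the map sending m ∈ M_{φ<a} to the S¹-orbit of (m, √(a − φ(m))) ∈ ψ⁻¹(a), and sending the S¹-orbit of m ∈ φ⁻¹(a) to the S¹-orbit of (m, 0), is a bijection from M_{φ<a} ⊔ φ⁻¹(a)/S¹ onto M^a. -/

import Mathlib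

variable {M : Type*} [TopologicalSpace M] [MulAction Circle M]

/-- The level set `ψ⁻¹(a)` of `ψ(m, z) = φ(m) + |z|²` in `M × ℂ`. -/
abbrev PsiLevel (φ : M → ℝ) (a : ℝ) : Type _ :=
  {p : M × ℂ // φ p.1 + Complex.normSq p.2 = a}

/-- The orbit relation of the diagonal `S¹`-action on the level set `ψ⁻¹(a)`. -/
abbrev cutRel (φ : M → ℝ) (a : ℝ) : PsiLevel φ a → PsiLevel φ a → Prop :=
  fun p q => ∃ w : Circle, w • p.1.1 = q.1.1 ∧ (w : ℂ) * p.1.2 = q.1.2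

/-- The cut space `M^a = ψ⁻¹(a)/S¹`. -/
abbrev CutSpace (φ : M → ℝ) (a : ℝ) : Type _ := Quot (cutRel φ a)

/-- The orbit relation of the `S¹`-action on the level set `φ⁻¹(a)`. -/
abbrev levelRel (φ : M → ℝ) (a : ℝ) : {m : M // φ m = a} → {m : M // φ m = a} → Prop :=
  fun p q => ∃ w : Circle, w • p.1 = q.1

/-- The map `M_{φ<a} ⊔ φ⁻¹(a)/S¹ → M^a` of STATEMENT 3: a point `m` with `φ(m) < a` is sent
to the orbit of `(m, √(a - φ(m)))`, and the orbit of `m ∈ φ⁻¹(a)` is sent to the orbit of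
`(m, 0)`. -/
noncomputable def cutDecompMap (φ : M → ℝ) (a : ℝ) :
    {m : M // φ m < a} ⊕ Quot (levelRel φ a) → CutSpace φ a :=
  Sum.elim
    (fun m => Quot.mk _ ⟨(m.1, (Real.sqrt (a - φ m.1) : ℂ)), by
      have h : (0 : ℝ) ≤ a - φ m.1 := by linarith [m.2]
      rw [Complex.normSq_ofReal, Real.mul_self_sqrt h]; ring⟩)
    (Quot.lift
      (fun m => Quot.mk _ ⟨(m.1, 0), by simp [m.2]⟩)
      (fun p q hpq => by
        obtain ⟨w, hw⟩ := hpq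
        exact Quot.sound ⟨w, hw, by simp⟩))

lemma cutRel_equivalence (φ : M → ℝ) (a : ℝ) : Equivalence (cutRel φ a) := by
  constructor
  · intro p; exact ⟨1, one_smul _ _, by simp⟩
  · rintro p q ⟨w, h1, h2⟩
    refine ⟨w⁻¹, by rw [← h1, inv_smul_smul], ?_⟩
    rw [← h2, Circle.coe_inv, inv_mul_cancel_left₀ (Circle.coe_ne_zero w)]
  · rintro p q r ⟨w, h1, h2⟩ ⟨w', h1', h2'⟩
    refine ⟨w' * w, ?_, ?_⟩
    · rw [mul_smul, h1, h1']
    · push_cast; rw [mul_assoc, h2, h2']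

lemma cutRel_of_eq {φ : M → ℝ} {a : ℝ} {p q : PsiLevel φ a}
    (h : (Quot.mk (cutRel φ a) p) = Quot.mk (cutRel φ a) q) : cutRel φ a p q :=
  (Equivalence.eqvGen_iff (cutRel_equivalence φ a)).mp (Quot.eq.mp h)

theorem cutSpace_decomposition [ContinuousSMul Circle M]
    (φ : M → ℝ) (hφc : Continuous φ) (hφinv : ∀ (w : Circle) (m : M), φ (w • m) = φ m)
    (a : ℝ) :
    Function.Bijective (cutDecompMap φ a) := by
  constructor
  · rintro (⟨m, hm⟩ | q) (⟨m', hm'⟩ | q') h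
    · obtain ⟨w, h1, h2⟩ := cutRel_of_eq h
      dsimp only at h1 h2
      have hr : (0 : ℝ) < Real.sqrt (a - φ m) := Real.sqrt_pos.mpr (by linarith)
      have hr' := Real.sqrt_nonneg (a - φ m')
      have heq : Real.sqrt (a - φ m) = Real.sqrt (a - φ m') := by
        have habs := congrArg (‖·‖) h2
        simpa [Circle.norm_coe, Complex.norm_real, abs_of_nonneg hr.le, abs_of_nonneg hr'] using habs
      have hw : (w : ℂ) = 1 := by
        have h2' : (w : ℂ) * (Real.sqrt (a - φ m)) = 1 * (Real.sqrt (a - φ m)) := by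
          rw [one_mul, h2, heq]
        exact mul_right_cancel₀ (by exact_mod_cast hr.ne') h2'
      have hw1 : w = 1 := Subtype.ext hw
      rw [hw1, one_smul] at h1
      simp only [Sum.inl.injEq, Subtype.mk.injEq]
      exact h1
    · induction q' using Quot.ind with
      | _ p =>
        obtain ⟨w, h1, h2⟩ := cutRel_of_eq h
        have hr : (0 : ℝ) < Real.sqrt (a - φ m) := Real.sqrt_pos.mpr (by linarith)
        exfalso
        apply mul_ne_zero (Circle.coe_ne_zero w) (by exact_mod_cast hr.ne' : (Real.sqrt (a - φ m) : ℂ) ≠ 0)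
        simpa using h2
    · induction q using Quot.ind with
      | _ p =>
        obtain ⟨w, h1, h2⟩ := cutRel_of_eq h
        have hr : (0 : ℝ) < Real.sqrt (a - φ m') := Real.sqrt_pos.mpr (by linarith)
        exfalso
        apply hr.ne'
        have : (0 : ℂ) = (Real.sqrt (a - φ m') : ℂ) := by simpa using h2
        exact_mod_cast this.symm
    · induction q using Quot.ind with
      | _ p =>
        induction q' using Quot.ind with
        | _ p' =>
          obtain ⟨w, h1, h2⟩ := cutRel_of_eq h
          exact congrArg Sum.inr (Quot.sound ⟨w, h1⟩)
  · intro x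
    induction x using Quot.ind with
    | _ p =>
      obtain ⟨⟨m, z⟩, hp⟩ := p
      by_cases hz : z = 0
      · refine ⟨Sum.inr (Quot.mk _ ⟨m, by simpa [hz] using hp⟩), ?_⟩
        simp only [cutDecompMap, Sum.elim_inr]
        exact congrArg _ (by subst hz; rfl)
      · have hzpos : 0 < Complex.normSq z := Complex.normSq_pos.mpr hz
        have habs : (0 : ℝ) < ‖z‖ := norm_pos_iff.mpr hz
        have hw : ‖(↑(‖z‖) / z : ℂ)‖ = 1 := by
          rw [norm_div, Complex.norm_real, Real.norm_eq_abs, abs_of_nonneg habs.le]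
          simp [habs.ne']
        set w : Circle := ⟨_, mem_sphere_zero_iff_norm.mpr hw⟩ with hwdef
        have hφm : φ (w • m) < a := by rw [hφinv]; dsimp at hp; linarith
        refine ⟨Sum.inl ⟨w • m, hφm⟩, Quot.sound ⟨w⁻¹, ?_, ?_⟩⟩
        · simp
        · have hsq : Real.sqrt (a - φ (w • m)) = ‖z‖ := by
            rw [hφinv]
            have : a - φ m = Complex.normSq z := by dsimp at hp; linarith
            rw [this, ← Complex.sq_norm, Real.sqrt_sq habs.le]
          have hcoe : (w : ℂ) = ↑(‖z‖) / z := rfl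
          show (↑w⁻¹ : ℂ) * (Real.sqrt (a - φ (w • m)) : ℂ) = z
          rw [Circle.coe_inv, hcoe, hsq]
          have hne : ((‖z‖ : ℂ)) ≠ 0 := by exact_mod_cast habs.ne'
          field_simp
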